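/- arXiv:2410.20143 — 11 statements merged into one kernel-verified Lean document; each statement's English description precedes it below -/
import Mathlib

section
/- Let I = (N, P, c, b, (A_i)_{i∈N}) be a PB instance under dichotomous preferences and let OPT = max_{S feasible} min_{i∈N} c(A_i ∩ S). Suppose x : P → ℝ satisfies 0 ≤ x_p ≤ 1 for all p, Σ_{p∈P} c(p)·x_p ≤ b, and OPT ≤ Σ_{p∈A_i} c(p)·x_p for every voter i (these conditions hold for an optimal solution of the LP relaxation of the maxmin integer program). Let S ⊆ P be any set with c(S) ≤ b such that c(p)·x_p ≥ c(p′)·x_{p′} for every p ∈ S and p′ ∈ P∖S (as produced by the Ordered-Relax greedy algorithm), let j be a voter minimizing c(A_i ∩ S) over i ∈ N, and assume S∖A_j ≠ ∅. Then c(A_j ∩ S) ≥ OPT − (|A_j∖S| / |S∖A_j|)·(b − OPT). -/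
open Finset

/-- Additive approximation guarantee of the Ordered-Relax algorithm for Maxmin PB:
if `x` is a feasible point of the LP relaxation with LP value at least `OPT`
(the optimal maxmin value), `S` is a feasible set consisting of projects with the
largest values `c p * x p` (as produced by Ordered-Relax), and `j` is a worst-off
voter for `S` with `S \ A j ≠ ∅`, then
`c(A_j ∩ S) ≥ OPT − (|A_j∖S| / |S∖A_j|)·(b − OPT)`. -/
theorem stmt_1 {N P : Type*} [Fintype N] [Nonempty N] [Fintype P] [DecidableEq P]
    (c : P → ℕ) (hc : ∀ p, 0 < c p) (b : ℕ) (A : N → Finset P)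
    (OPT : ℕ)
    (hOPT : IsGreatest
      {v : ℕ | ∃ S : Finset P, (∑ p ∈ S, c p) ≤ b ∧
        v = Finset.univ.inf' Finset.univ_nonempty (fun i : N => ∑ p ∈ A i ∩ S, c p)} OPT)
    (x : P → ℝ) (hx0 : ∀ p, 0 ≤ x p) (hx1 : ∀ p, x p ≤ 1)
    (hxb : ∑ p : P, (c p : ℝ) * x p ≤ (b : ℝ))
    (hxOPT : ∀ i : N, (OPT : ℝ) ≤ ∑ p ∈ A i, (c p : ℝ) * x p)
    (S : Finset P) (hSb : (∑ p ∈ S, c p) ≤ b)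
    (hgreedy : ∀ p ∈ S, ∀ p' ∉ S, (c p' : ℝ) * x p' ≤ (c p : ℝ) * x p)
    (j : N) (hj : ∀ i : N, ∑ p ∈ A j ∩ S, c p ≤ ∑ p ∈ A i ∩ S, c p)
    (hSA : (S \ A j).Nonempty) :
    (OPT : ℝ) - ((A j \ S).card : ℝ) / ((S \ A j).card : ℝ) * ((b : ℝ) - (OPT : ℝ))
      ≤ ((∑ p ∈ A j ∩ S, c p : ℕ) : ℝ) := by
  set T := A j ∩ S with hT
  set D := S \ A j with hD
  set E := A j \ S with hE
  have hDpos : (0 : ℝ) < (D.card : ℝ) := by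
    exact_mod_cast Finset.card_pos.mpr hSA
  have hcx0 : ∀ p, (0 : ℝ) ≤ (c p : ℝ) * x p := fun p =>
    mul_nonneg (Nat.cast_nonneg _) (hx0 p)
  -- split sum over A j
  have hsplit : (∑ p ∈ T, (c p : ℝ) * x p) + ∑ p ∈ E, (c p : ℝ) * x p
      = ∑ p ∈ A j, (c p : ℝ) * x p := Finset.sum_inter_add_sum_sdiff _ _ _
  have h1 : (OPT : ℝ) ≤ (∑ p ∈ T, (c p : ℝ) * x p) + ∑ p ∈ E, (c p : ℝ) * x p := by
    rw [hsplit]; exact hxOPT j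
  -- bound on T
  have h2 : (∑ p ∈ T, (c p : ℝ) * x p) ≤ ∑ p ∈ T, (c p : ℝ) := by
    refine Finset.sum_le_sum fun p _ => ?_
    calc (c p : ℝ) * x p ≤ (c p : ℝ) * 1 :=
          mul_le_mul_of_nonneg_left (hx1 p) (Nat.cast_nonneg _)
      _ = (c p : ℝ) := mul_one _
  -- pairwise bound : E sums vs D sums
  have h3 : (∑ p ∈ E, (c p : ℝ) * x p) * (D.card : ℝ)
      ≤ (E.card : ℝ) * ∑ q ∈ D, (c q : ℝ) * x q := by
    calc (∑ p ∈ E, (c p : ℝ) * x p) * (D.card : ℝ)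
        = ∑ p ∈ E, ∑ _q ∈ D, (c p : ℝ) * x p := by
          rw [Finset.sum_mul]
          refine Finset.sum_congr rfl fun p _ => ?_
          rw [Finset.sum_const, nsmul_eq_mul, mul_comm]
      _ ≤ ∑ p ∈ E, ∑ q ∈ D, (c q : ℝ) * x q := by
          refine Finset.sum_le_sum fun p hp => Finset.sum_le_sum fun q hq => ?_
          have hqS : q ∈ S := (Finset.mem_sdiff.mp hq).1
          have hpS : p ∉ S := (Finset.mem_sdiff.mp hp).2
          exact hgreedy q hqS p hpS
      _ = (E.card : ℝ) * ∑ q ∈ D, (c q : ℝ) * x q := by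
          rw [Finset.sum_const, nsmul_eq_mul]
  -- sum over D bounded by b - OPT
  have h4 : (∑ q ∈ D, (c q : ℝ) * x q) ≤ (b : ℝ) - (OPT : ℝ) := by
    have hdisj : Disjoint D (A j) := Finset.sdiff_disjoint
    have hsub : (∑ p ∈ D ∪ A j, (c p : ℝ) * x p) ≤ ∑ p : P, (c p : ℝ) * x p :=
      Finset.sum_le_sum_of_subset_of_nonneg (Finset.subset_univ _)
        (fun p _ _ => hcx0 p)
    rw [Finset.sum_union hdisj] at hsub
    have := hxOPT j
    linarith
  -- combine
  have hE3 : (∑ p ∈ E, (c p : ℝ) * x p)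
      ≤ (E.card : ℝ) / (D.card : ℝ) * ((b : ℝ) - (OPT : ℝ)) := by
    rw [div_mul_eq_mul_div, le_div_iff₀ hDpos]
    calc (∑ p ∈ E, (c p : ℝ) * x p) * (D.card : ℝ)
        ≤ (E.card : ℝ) * ∑ q ∈ D, (c q : ℝ) * x q := h3
      _ ≤ (E.card : ℝ) * ((b : ℝ) - (OPT : ℝ)) :=
          mul_le_mul_of_nonneg_left h4 (Nat.cast_nonneg _)
  have hcast : ((∑ p ∈ T, c p : ℕ) : ℝ) = ∑ p ∈ T, (c p : ℝ) := by push_cast; ring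
  rw [hcast]
  linarith
end

section
/- Fix a budget b ∈ ℕ with b ≥ 4 and b divisible by 4, a set P of 2b projects each of cost 1, and two voters. Let G be a PB algorithm mapping every dichotomous profile (A_1, A_2) of subsets of P to a single feasible set G(A_1, A_2) ⊆ P (so |G(A_1,A_2)| ≤ b), and suppose G is exhaustive (for every profile and every p ∉ G(A_1,A_2), |G(A_1,A_2)| + 1 > b) and strategy-proof (for each voter i ∈ {1,2}, every profile, and every alternative report A′_i ⊆ P, |A_i ∩ G(A_i, A_{−i})| ≥ |A_i ∩ G(A′_i, A_{−i})|). Then there exists a profile (A_1, A_2) of knapsack votes (|A_1| ≤ b and |A_2| ≤ b) such that min(|A_1 ∩ G(A_1,A_2)|, |A_2 ∩ G(A_1,A_2)|) ≤ (2/3) · max_{S ⊆ P, |S| ≤ b} min(|A_1 ∩ S|, |A_2 ∩ S|). Hence no exhaustive strategy-proof PB algorithm achieves an approximation guarantee better than 2/3 for the maxmin objective, even on instances with only knapsack votes and unit-cost projects. -/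
open Finset

/-- Lower bound on the optimal maxmin value: if `P` and `Q` both have `b` elements, then
some feasible set `S` (of at most `b` elements) achieves
`min (P ∩ S).card (Q ∩ S).card ≥ (P ∩ Q).card + (Q \ P).card / 2`. -/
lemma opt_lb_aux {n b : ℕ} (P Q : Finset (Fin n)) (hP : P.card = b) (hQ : Q.card = b) :
    (P ∩ Q).card + (Q \ P).card / 2 ≤
      (Finset.univ.powerset.filter fun S => S.card ≤ b).sup
        fun S => min (P ∩ S).card (Q ∩ S).card := by
  classical
  set x := (P ∩ Q).card with hx
  set y := (Q \ P).card with hy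
  have hxyQ : x + y = b := by
    have := Finset.card_inter_add_card_sdiff Q P
    rw [Finset.inter_comm] at this
    omega
  have hPQcard : (P \ Q).card = y := by
    have := Finset.card_inter_add_card_sdiff P Q
    omega
  obtain ⟨SA, hSAsub, hSAcard⟩ :=
    Finset.exists_subset_card_eq (s := P \ Q) (n := y - y / 2) (by omega)
  obtain ⟨SW, hSWsub, hSWcard⟩ :=
    Finset.exists_subset_card_eq (s := Q \ P) (n := y / 2) (by omega)
  set S : Finset (Fin n) := (P ∩ Q) ∪ SA ∪ SW with hS
  have hSAP : SA ⊆ P := hSAsub.trans sdiff_subset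
  have hSWQ : SW ⊆ Q := hSWsub.trans sdiff_subset
  have hSAQ : Disjoint SA Q := by
    have : Disjoint (P \ Q) Q := sdiff_disjoint
    exact this.mono_left hSAsub
  have hSWP : Disjoint SW P := by
    have : Disjoint (Q \ P) P := sdiff_disjoint
    exact this.mono_left hSWsub
  -- compute P ∩ S
  have hPS : P ∩ S = (P ∩ Q) ∪ SA := by
    rw [hS, Finset.inter_union_distrib_left, Finset.inter_union_distrib_left]
    rw [← Finset.inter_assoc, Finset.inter_self]
    rw [Finset.inter_eq_right.mpr hSAP]
    rw [(Finset.disjoint_iff_inter_eq_empty.mp hSWP.symm)]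
    simp
  have hQS : Q ∩ S = (P ∩ Q) ∪ SW := by
    rw [hS, Finset.inter_union_distrib_left, Finset.inter_union_distrib_left]
    have h1 : Q ∩ (P ∩ Q) = P ∩ Q := by
      rw [Finset.inter_comm P Q, ← Finset.inter_assoc, Finset.inter_self]
    rw [h1, Finset.inter_eq_right.mpr hSWQ]
    rw [(Finset.disjoint_iff_inter_eq_empty.mp hSAQ.symm)]
    simp
  have hdisjA : Disjoint (P ∩ Q) SA := by
    exact (hSAQ.mono_right inter_subset_right).symm
  have hdisjW : Disjoint (P ∩ Q) SW := by
    exact (hSWP.mono_right inter_subset_left).symm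
  have hPScard : (P ∩ S).card = x + (y - y / 2) := by
    rw [hPS, Finset.card_union_of_disjoint hdisjA, hSAcard]
  have hQScard : (Q ∩ S).card = x + y / 2 := by
    rw [hQS, Finset.card_union_of_disjoint hdisjW, hSWcard]
  have hScard : S.card ≤ b := by
    calc S.card ≤ ((P ∩ Q) ∪ SA).card + SW.card := Finset.card_union_le _ _
    _ ≤ (P ∩ Q).card + SA.card + SW.card := by
        have := Finset.card_union_le (P ∩ Q) SA
        omega
    _ ≤ b := by rw [hSAcard, hSWcard]; omega
  have hmem : S ∈ Finset.univ.powerset.filter fun T => T.card ≤ b := by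
    rw [Finset.mem_filter, Finset.mem_powerset]
    exact ⟨Finset.subset_univ S, hScard⟩
  have hle : x + y / 2 ≤ min (P ∩ S).card (Q ∩ S).card := by
    rw [hPScard, hQScard]
    omega
  exact hle.trans (Finset.le_sup (f := fun S => min (P ∩ S).card (Q ∩ S).card) hmem)

/-- No exhaustive, strategy-proof PB algorithm achieves an approximation guarantee better
than `2/3` for the maxmin objective, even for instances with only knapsack votes and
unit-cost projects: with budget `b ≥ 4` divisible by `4` and `2b` unit-cost projects,
for every exhaustive strategy-proof algorithm `G` there is a profile of knapsack votes
on which the maxmin value of the output is at most `2/3` of the optimal maxmin value. -/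
theorem stmt_2 (b : ℕ) (hb : 4 ≤ b) (hdvd : 4 ∣ b)
    (G : Finset (Fin (2 * b)) → Finset (Fin (2 * b)) → Finset (Fin (2 * b)))
    (hfeas : ∀ A1 A2, (G A1 A2).card ≤ b)
    (hexh : ∀ A1 A2, ∀ p, p ∉ G A1 A2 → b < (G A1 A2).card + 1)
    (hsp1 : ∀ A1 A2 A1', (A1 ∩ G A1' A2).card ≤ (A1 ∩ G A1 A2).card)
    (hsp2 : ∀ A1 A2 A2', (A2 ∩ G A1 A2').card ≤ (A2 ∩ G A1 A2).card) :
    ∃ A1 A2 : Finset (Fin (2 * b)), A1.card ≤ b ∧ A2.card ≤ b ∧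
      ((min (A1 ∩ G A1 A2).card (A2 ∩ G A1 A2).card : ℕ) : ℝ) ≤
        (2 / 3 : ℝ) *
          (((Finset.univ.powerset.filter fun S => S.card ≤ b).sup
            fun S => min (A1 ∩ S).card (A2 ∩ S).card : ℕ) : ℝ) := by
  classical
  -- the two halves
  set A : Finset (Fin (2 * b)) := Finset.univ.filter (fun i => (i : ℕ) < b) with hA
  set B : Finset (Fin (2 * b)) := Finset.univ.filter (fun i => b ≤ (i : ℕ)) with hB
  have hABdisj : Disjoint A B := by
    rw [Finset.disjoint_left]
    intro i hiA hiB
    rw [hA, Finset.mem_filter] at hiA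
    rw [hB, Finset.mem_filter] at hiB
    omega
  have hABunion : A ∪ B = Finset.univ := by
    ext i
    simp only [hA, hB, Finset.mem_union, Finset.mem_filter, Finset.mem_univ, true_and,
      iff_true]
    omega
  have hcardAB : A.card + B.card = 2 * b := by
    rw [← Finset.card_union_of_disjoint hABdisj, hABunion, Finset.card_univ,
      Fintype.card_fin]
  have hAcard : A.card = b := by
    have hb2 : b ≤ 2 * b := by omega
    have himg : A = (Finset.univ : Finset (Fin b)).map
        ⟨Fin.castLE hb2, Fin.castLE_injective hb2⟩ := by
      ext i
      simp only [hA, Finset.mem_filter, Finset.mem_univ, true_and, Finset.mem_map,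
        Function.Embedding.coeFn_mk]
      constructor
      · intro h
        exact ⟨⟨(i : ℕ), h⟩, Fin.ext rfl⟩
      · rintro ⟨j, rfl⟩
        exact j.isLt
    rw [himg, Finset.card_map, Finset.card_univ, Fintype.card_fin]
  have hBcard : B.card = b := by omega
  set W : Finset (Fin (2 * b)) := G A B with hW
  have hWle : W.card ≤ b := hfeas A B
  have hWcard : W.card = b := by
    have hne : W ≠ Finset.univ := by
      intro h
      have h2 : W.card = 2 * b := by rw [h, Finset.card_univ, Fintype.card_fin]
      omega
    obtain ⟨p, hp⟩ : ∃ p, p ∉ W := by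
      by_contra hc
      push_neg at hc
      exact hne (Finset.eq_univ_iff_forall.mpr hc)
    have h6 := hexh A B p hp
    rw [← hW] at h6
    omega
  set x1 := (A ∩ W).card with hx1
  set x2 := (B ∩ W).card with hx2
  have hsplit : x1 + x2 = b := by
    have hd : Disjoint (A ∩ W) (B ∩ W) :=
      hABdisj.mono inter_subset_left inter_subset_left
    have hu : (A ∩ W) ∪ (B ∩ W) = W := by
      rw [← Finset.union_inter_distrib_right, hABunion, Finset.univ_inter]
    rw [hx1, hx2, ← Finset.card_union_of_disjoint hd, hu, hWcard]
  rcases le_or_gt x1 x2 with hcase | hcase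
  · -- the bad profile is `(A, W)`; strategy-proofness forces `G A W = W`.
    refine ⟨A, W, le_of_eq hAcard, le_of_eq hWcard, ?_⟩
    have hfix : G A W = W := by
      have h1 : (W ∩ G A B).card ≤ (W ∩ G A W).card := hsp2 A W B
      rw [← hW, Finset.inter_self, hWcard] at h1
      have h2 : (W ∩ G A W).card ≤ W.card := Finset.card_le_card inter_subset_left
      have h4 : W ∩ G A W = W :=
        Finset.eq_of_subset_of_card_le inter_subset_left (by omega)
      have h5 : W ⊆ G A W := by
        intro x hx
        have hx2 : x ∈ W ∩ G A W := by rw [h4]; exact hx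
        exact (Finset.mem_inter.mp hx2).2
      exact (Finset.eq_of_subset_of_card_le h5 (by rw [hWcard]; exact hfeas A W)).symm
    have hopt := opt_lb_aux A W hAcard hWcard
    have hWA : (W \ A).card = x2 := by
      have h := Finset.card_inter_add_card_sdiff W A
      rw [Finset.inter_comm] at h
      omega
    rw [hfix, Finset.inter_self]
    set O := (Finset.univ.powerset.filter fun S => S.card ≤ b).sup
      (fun S => min (A ∩ S).card (W ∩ S).card) with hO
    have hminx : min x1 W.card = x1 := by omega
    rw [hminx]
    have hpar : x1 ≤ 2 * (x2 / 2) := by omega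
    have hnat : 3 * x1 ≤ 2 * O := by omega
    have hR : (3 : ℝ) * (x1 : ℝ) ≤ 2 * (O : ℝ) := by exact_mod_cast hnat
    linarith
  · -- the bad profile is `(W, B)`; strategy-proofness forces `G W B = W`.
    refine ⟨W, B, le_of_eq hWcard, le_of_eq hBcard, ?_⟩
    have hfix : G W B = W := by
      have h1 : (W ∩ G A B).card ≤ (W ∩ G W B).card := hsp1 W B A
      rw [← hW, Finset.inter_self, hWcard] at h1
      have h2 : (W ∩ G W B).card ≤ W.card := Finset.card_le_card inter_subset_left
      have h4 : W ∩ G W B = W :=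
        Finset.eq_of_subset_of_card_le inter_subset_left (by omega)
      have h5 : W ⊆ G W B := by
        intro x hx
        have hx2 : x ∈ W ∩ G W B := by rw [h4]; exact hx
        exact (Finset.mem_inter.mp hx2).2
      exact (Finset.eq_of_subset_of_card_le h5 (by rw [hWcard]; exact hfeas W B)).symm
    have hopt := opt_lb_aux W B hWcard hBcard
    have hWB : (W ∩ B).card = x2 := by rw [Finset.inter_comm]
    have hBW : (B \ W).card = x1 := by
      have h := Finset.card_inter_add_card_sdiff B W
      omega
    rw [hfix, Finset.inter_self]
    set O := (Finset.univ.powerset.filter fun S => S.card ≤ b).sup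
      (fun S => min (W ∩ S).card (B ∩ S).card) with hO
    rw [hWB, hBW] at hopt
    have hminx : min W.card x2 = x2 := by omega
    rw [hminx]
    have hpar : x2 ≤ 2 * (x1 / 2) := by omega
    have hnat : 3 * x2 ≤ 2 * O := by omega
    have hR : (3 : ℝ) * (x2 : ℝ) ≤ 2 * (O : ℝ) := by exact_mod_cast hnat
    linarith
end

section
/- The MPB rule satisfies splitting monotonicity: let I = (N, P, c, b, (A_i)) be a PB instance and x ∈ W(I) a winning project. Form the instance I′ by splitting x into a nonempty set X of new projects (disjoint from P) with positive costs summing to c(x), setting P′ = (P∖{x}) ∪ X, keeping N, b, and the costs of all other projects unchanged, and setting A′_i = (A_i∖{x}) ∪ X if x ∈ A_i and A′_i = A_i otherwise. Then X ∩ W(I′) ≠ ∅, i.e., at least one of the new projects wins in I′. -/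
variable {N U : Type*}

/-- Total cost of a set of projects. -/
def costOf [DecidableEq U] (c : U → ℕ) (S : Finset U) : ℕ := ∑ p ∈ S, c p

/-- The minimum utility of a voter, where the utility of voter `i` from `S` is the
total cost of the approved projects of `i` in `S`. -/
def minUtil [Fintype N] [Nonempty N] [DecidableEq U] (c : U → ℕ) (A : N → Finset U)
    (S : Finset U) : ℕ :=
  Finset.univ.inf' Finset.univ_nonempty fun i : N => costOf c (A i ∩ S)

/-- `S` is selected by the Maxmin Participatory Budgeting (MPB) rule for the instance
with project set `Pr`, costs `c`, budget `b`, and approval profile `A`. -/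
def MPBsel [Fintype N] [Nonempty N] [DecidableEq U] (Pr : Finset U) (c : U → ℕ) (b : ℕ)
    (A : N → Finset U) (S : Finset U) : Prop :=
  S ⊆ Pr ∧ costOf c S ≤ b ∧
    ∀ T : Finset U, T ⊆ Pr → costOf c T ≤ b → minUtil c A T ≤ minUtil c A S

/-- Project `p` wins, i.e., belongs to some set selected by MPB. -/
def winsIn [Fintype N] [Nonempty N] [DecidableEq U] (Pr : Finset U) (c : U → ℕ) (b : ℕ)
    (A : N → Finset U) (p : U) : Prop :=
  ∃ S : Finset U, MPBsel Pr c b A S ∧ p ∈ S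

/-- Splitting monotonicity of MPB: if a winning project `x` is split into a nonempty set
`X` of new projects with positive costs summing to `c x`, and `x` is replaced by `X` in
every approval set containing it, then some project of `X` wins in the new instance. -/
theorem stmt_3 [Fintype N] [Nonempty N] [DecidableEq U]
    (Pr : Finset U) (c : U → ℕ) (b : ℕ) (A : N → Finset U)
    (hc : ∀ p ∈ Pr, 0 < c p) (hA : ∀ i : N, A i ⊆ Pr)
    (x : U) (hx : winsIn Pr c b A x)
    (X : Finset U) (hXne : X.Nonempty) (hXdisj : Disjoint X Pr)
    (c' : U → ℕ)
    (hc'old : ∀ p ∈ Pr, p ≠ x → c' p = c p)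
    (hc'pos : ∀ p ∈ X, 0 < c' p)
    (hc'sum : ∑ p ∈ X, c' p = c x)
    (A' : N → Finset U)
    (hA' : ∀ i : N, A' i = if x ∈ A i then (A i \ {x}) ∪ X else A i) :
    ∃ p ∈ X, winsIn ((Pr \ {x}) ∪ X) c' b A' p := by
  classical
  obtain ⟨S, ⟨hSsub, hSb, hSopt⟩, hxS⟩ := hx
  have hXPr : ∀ p ∈ X, p ∉ Pr := fun p hp hq => Finset.disjoint_left.mp hXdisj hp hq
  have hxPr : x ∈ Pr := hSsub hxS
  -- cost of sets inside Pr \ {x} is unchanged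
  have hcost_eq : ∀ T : Finset U, T ⊆ Pr \ {x} → costOf c' T = costOf c T := by
    intro T hT
    refine Finset.sum_congr rfl fun p hp => ?_
    have h := Finset.mem_sdiff.mp (hT hp)
    exact hc'old p h.1 (by simpa using h.2)
  -- minUtil of sets inside Pr \ {x} is unchanged
  have hmin_eq : ∀ T : Finset U, T ⊆ Pr \ {x} → minUtil c' A' T = minUtil c A T := by
    intro T hT
    have hfun : ∀ i : N, costOf c' (A' i ∩ T) = costOf c (A i ∩ T) := by
      intro i
      have hAT : A' i ∩ T = A i ∩ T := by
        rw [hA' i]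
        split_ifs with hxi
        · ext p
          simp only [Finset.mem_inter, Finset.mem_union, Finset.mem_sdiff,
            Finset.mem_singleton]
          constructor
          · rintro ⟨h1 | h1, h2⟩
            · exact ⟨h1.1, h2⟩
            · exact absurd (Finset.mem_sdiff.mp (hT h2)).1 (hXPr p h1)
          · rintro ⟨h1, h2⟩
            exact ⟨Or.inl ⟨h1, fun he => (Finset.mem_sdiff.mp (hT h2)).2 (Finset.mem_singleton.mpr he)⟩, h2⟩
        · rfl
      rw [hAT]
      exact hcost_eq _ (fun p hp => hT (Finset.mem_inter.mp hp).2)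
    simp only [minUtil]
    exact Finset.inf'_congr _ rfl (fun i _ => hfun i)
  -- the split set S'
  set S' : Finset U := (S \ {x}) ∪ X with hS'def
  have hSxPr : S \ {x} ⊆ Pr \ {x} := Finset.sdiff_subset_sdiff hSsub le_rfl
  have hdisjSX : Disjoint (S \ {x}) X :=
    (hXdisj.mono_right hSsub).symm.mono_left Finset.sdiff_subset
  have hcX : costOf c' X = c x := hc'sum
  have hS'cost : costOf c' S' = costOf c S := by
    rw [hS'def, costOf, Finset.sum_union hdisjSX]
    have h1 : ∑ p ∈ S \ {x}, c' p = costOf c (S \ {x}) := hcost_eq _ hSxPr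
    rw [h1, hc'sum, costOf, ← Finset.sum_eq_sum_sdiff_singleton_add hxS]
    rfl
  have hS'sub : S' ⊆ (Pr \ {x}) ∪ X :=
    Finset.union_subset_union hSxPr le_rfl
  -- minUtil of the split set equals minUtil of S
  have hS'min : minUtil c' A' S' = minUtil c A S := by
    have hfun : ∀ i : N, costOf c' (A' i ∩ S') = costOf c (A i ∩ S) := by
      intro i
      rw [hA' i]
      split_ifs with hxi
      · have hset : ((A i \ {x}) ∪ X) ∩ S' = ((A i ∩ S) \ {x}) ∪ X := by
          ext p
          simp only [hS'def, Finset.mem_inter, Finset.mem_union, Finset.mem_sdiff,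
            Finset.mem_singleton]
          constructor
          · rintro ⟨h1 | h1, h2 | h2⟩
            · exact Or.inl ⟨⟨h1.1, h2.1⟩, h1.2⟩
            · exact Or.inr h2
            · exact absurd (hSsub h2.1) (hXPr p h1)
            · exact Or.inr h2
          · rintro (⟨⟨h1, h2⟩, h3⟩ | h1)
            · exact ⟨Or.inl ⟨h1, h3⟩, Or.inl ⟨h2, h3⟩⟩
            · exact ⟨Or.inr h1, Or.inr h1⟩
        have hdisj2 : Disjoint ((A i ∩ S) \ {x}) X := by
          refine Finset.disjoint_left.mpr fun p hp hpX => ?_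
          exact hXPr p hpX (hSsub (Finset.mem_inter.mp (Finset.mem_sdiff.mp hp).1).2)
        have hsub2 : (A i ∩ S) \ {x} ⊆ Pr \ {x} :=
          Finset.sdiff_subset_sdiff (fun p hp => hA i (Finset.mem_inter.mp hp).1) le_rfl
        rw [hset, costOf, Finset.sum_union hdisj2]
        have h1 : ∑ p ∈ (A i ∩ S) \ {x}, c' p = costOf c ((A i ∩ S) \ {x}) :=
          hcost_eq _ hsub2
        have hxAS : x ∈ A i ∩ S := Finset.mem_inter.mpr ⟨hxi, hxS⟩
        rw [h1, hc'sum, costOf, ← Finset.sum_eq_sum_sdiff_singleton_add hxAS]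
        rfl
      · have hset : A i ∩ S' = A i ∩ S := by
          ext p
          simp only [hS'def, Finset.mem_inter, Finset.mem_union, Finset.mem_sdiff,
            Finset.mem_singleton]
          constructor
          · rintro ⟨h1, h2 | h2⟩
            · exact ⟨h1, h2.1⟩
            · exact absurd (hA i h1) (hXPr p h2)
          · rintro ⟨h1, h2⟩
            exact ⟨h1, Or.inl ⟨h2, fun he => hxi (he ▸ h1)⟩⟩
        have hsub2 : A i ∩ S ⊆ Pr \ {x} := by
          intro p hp
          obtain ⟨h1, h2⟩ := Finset.mem_inter.mp hp
          exact Finset.mem_sdiff.mpr ⟨hA i h1, by simp; rintro rfl; exact hxi h1⟩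
        rw [hset]
        exact hcost_eq _ hsub2
    simp only [minUtil]
    exact Finset.inf'_congr _ rfl (fun i _ => hfun i)
  -- take a maximizer T over feasible subsets of the new instance
  obtain ⟨T, hTmem, hTmax⟩ := Finset.exists_max_image
    (((Pr \ {x}) ∪ X).powerset.filter fun T => costOf c' T ≤ b) (minUtil c' A')
    ⟨∅, Finset.mem_filter.mpr ⟨Finset.mem_powerset.mpr (Finset.empty_subset _), by simp [costOf]⟩⟩
  simp only [Finset.mem_filter, Finset.mem_powerset] at hTmem
  obtain ⟨hTsub, hTb⟩ := hTmem
  have hTmax' : ∀ T' : Finset U, T' ⊆ (Pr \ {x}) ∪ X → costOf c' T' ≤ b →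
      minUtil c' A' T' ≤ minUtil c' A' T := by
    intro T' h1 h2
    exact hTmax T' (Finset.mem_filter.mpr ⟨Finset.mem_powerset.mpr h1, h2⟩)
  rcases (T ∩ X).eq_empty_or_nonempty with hTX | ⟨p, hp⟩
  · -- T avoids X, so S' is also a maximizer
    have hTPr : T ⊆ Pr \ {x} := by
      intro p hp
      rcases Finset.mem_union.mp (hTsub hp) with h | h
      · exact h
      · exact absurd (Finset.mem_inter.mpr ⟨hp, h⟩) (by simp [hTX])
    have hle : minUtil c' A' T ≤ minUtil c' A' S' := by
      rw [hmin_eq T hTPr, hS'min]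
      exact hSopt T (hTPr.trans Finset.sdiff_subset) (by rw [← hcost_eq T hTPr]; exact hTb)
    obtain ⟨p, hpX⟩ := hXne
    exact ⟨p, hpX, S', ⟨hS'sub, by rw [hS'cost]; exact hSb,
      fun T' h1 h2 => (hTmax' T' h1 h2).trans hle⟩, Finset.mem_union_right _ hpX⟩
  · obtain ⟨hpT, hpX⟩ := Finset.mem_inter.mp hp
    exact ⟨p, hpX, T, ⟨hTsub, hTb, hTmax'⟩, hpT⟩
end

section
/- The MPB rule satisfies merging monotonicity: let I = (N, P, c, b, (A_i)) be a PB instance, S ∈ MPB(I), and P′ ⊆ S a nonempty set of winning projects such that A_i ∩ P′ ∈ {P′, ∅} for every voter i. Form I′ by merging P′ into a single new project p with c(p) = c(P′): replace the projects P′ by {p} in the project set, and replace P′ by {p} in every approval set A_i with P′ ⊆ A_i (other approval sets, N, b, and all other costs are unchanged). Then p ∈ W(I′). -/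
variable {N U : Type*}

/-- Merging monotonicity of MPB: if the projects of a nonempty set `P' ⊆ S` of winning
projects (where `S` is MPB-selected), approved by exactly the same voters, are merged
into a single new project `p` of cost `c(P')`, then `p` wins in the new instance. -/
theorem stmt_4 [Fintype N] [Nonempty N] [DecidableEq U]
    (Pr : Finset U) (c : U → ℕ) (b : ℕ) (A : N → Finset U)
    (hc : ∀ q ∈ Pr, 0 < c q) (hA : ∀ i : N, A i ⊆ Pr)
    (S : Finset U) (hS : MPBsel Pr c b A S)
    (P' : Finset U) (hP'S : P' ⊆ S) (hP'ne : P'.Nonempty)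
    (hsame : ∀ i : N, A i ∩ P' = P' ∨ A i ∩ P' = ∅)
    (p : U) (hp : p ∉ Pr)
    (c' : U → ℕ)
    (hc'old : ∀ q ∈ Pr, q ∉ P' → c' q = c q)
    (hc'p : c' p = costOf c P')
    (A' : N → Finset U)
    (hA' : ∀ i : N, A' i = if P' ⊆ A i then (A i \ P') ∪ {p} else A i) :
    winsIn ((Pr \ P') ∪ {p}) c' b A' p := by
  classical
  obtain ⟨hSPr, hSb, hSopt⟩ := hS
  have hP'Pr : P' ⊆ Pr := hP'S.trans hSPr
  have hpS : p ∉ S := fun h => hp (hSPr h)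
  have hpAi : ∀ i : N, p ∉ A i := fun i h => hp (hA i h)
  -- costs agree off P'
  have hcongr : ∀ X : Finset U, X ⊆ Pr \ P' → costOf c' X = costOf c X := by
    intro X hX
    refine Finset.sum_congr rfl fun q hq => ?_
    obtain ⟨h1, h2⟩ := Finset.mem_sdiff.mp (hX hq)
    exact hc'old q h1 h2
  -- key correspondence
  have key : ∀ T' T : Finset U, T' ⊆ (Pr \ P') ∪ {p} →
      T = (if p ∈ T' then (T' \ {p}) ∪ P' else T') →
      T ⊆ Pr ∧ costOf c T = costOf c' T' ∧ minUtil c A T = minUtil c' A' T' := by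
    intro T' T hT' hTdef
    by_cases hpT : p ∈ T'
    · simp only [hpT, if_true] at hTdef
      have hT0 : T' \ {p} ⊆ Pr \ P' := by
        intro q hq
        obtain ⟨hq1, hq2⟩ := Finset.mem_sdiff.mp hq
        rcases Finset.mem_union.mp (hT' hq1) with h | h
        · exact h
        · exact absurd h hq2
      have hdisj : Disjoint (T' \ {p}) P' := by
        refine Finset.disjoint_left.mpr fun q hq hq' => ?_
        exact (Finset.mem_sdiff.mp (hT0 hq)).2 hq'
      subst hTdef
      refine ⟨?_, ?_, ?_⟩
      · intro q hq
        rcases Finset.mem_union.mp hq with h | h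
        · exact (Finset.mem_sdiff.mp (hT0 h)).1
        · exact hP'Pr h
      · -- cost equality
        have hTsplit : costOf c ((T' \ {p}) ∪ P') = costOf c (T' \ {p}) + costOf c P' :=
          Finset.sum_union hdisj
        have hT'split : T' = (T' \ {p}) ∪ {p} := by
          rw [Finset.sdiff_union_self_eq_union]
          exact (Finset.union_eq_left.mpr (Finset.singleton_subset_iff.mpr hpT)).symm
        have hdisj2 : Disjoint (T' \ {p}) ({p} : Finset U) :=
          Finset.disjoint_singleton_right.mpr (fun h => (Finset.mem_sdiff.mp h).2 (Finset.mem_singleton_self p))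
        have : costOf c' T' = costOf c' (T' \ {p}) + c' p := by
          conv_lhs => rw [hT'split]
          rw [costOf, Finset.sum_union hdisj2, Finset.sum_singleton]
          rfl
        rw [hTsplit, this, hcongr _ hT0, hc'p]
      · -- minUtil equality: pointwise
        unfold minUtil
        refine Finset.inf'_congr _ rfl fun i _ => ?_
        by_cases hsub : P' ⊆ A i
        · have hAi' : A' i = (A i \ P') ∪ {p} := by rw [hA' i, if_pos hsub]
          have hL : A i ∩ ((T' \ {p}) ∪ P') = (A i ∩ (T' \ {p})) ∪ P' := by
            rw [Finset.inter_union_distrib_left, Finset.inter_eq_right.mpr hsub]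
          have hR : A' i ∩ T' = (A i ∩ (T' \ {p})) ∪ {p} := by
            rw [hAi']
            ext q
            simp only [Finset.mem_inter, Finset.mem_union, Finset.mem_sdiff,
              Finset.mem_singleton]
            constructor
            · rintro ⟨hq1 | hq1, hq2⟩
              · left
                refine ⟨hq1.1, hq2, fun hqp => ?_⟩
                exact hpAi i (hqp ▸ hq1.1)
              · right; exact hq1
            · rintro (⟨⟨hq1, hq2, hq3⟩⟩ | hq1)
              · exact ⟨Or.inl ⟨hq1, fun hh => (Finset.mem_sdiff.mp (hT0 (Finset.mem_sdiff.mpr ⟨hq2, Finset.notMem_singleton.mpr hq3⟩))).2 hh⟩, hq2⟩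
              · exact ⟨Or.inr hq1, hq1 ▸ hpT⟩
          have hsubT0 : A i ∩ (T' \ {p}) ⊆ Pr \ P' := (Finset.inter_subset_right).trans hT0
          have hdA : Disjoint (A i ∩ (T' \ {p})) P' :=
            Finset.disjoint_left.mpr fun q hq => (Finset.mem_sdiff.mp (hsubT0 hq)).2
          have hdp : Disjoint (A i ∩ (T' \ {p})) ({p} : Finset U) :=
            Finset.disjoint_singleton_right.mpr fun h => hpAi i (Finset.mem_inter.mp h).1
          rw [hL, hR, costOf, costOf, Finset.sum_union hdA, Finset.sum_union hdp,
            Finset.sum_singleton, hc'p]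
          congr 1
          exact (hcongr _ hsubT0).symm
        · have hAiP' : A i ∩ P' = ∅ := by
            rcases hsame i with h | h
            · exact absurd (h ▸ Finset.inter_subset_left) hsub
            · exact h
          have hAi' : A' i = A i := by rw [hA' i, if_neg hsub]
          have hL : A i ∩ ((T' \ {p}) ∪ P') = A i ∩ (T' \ {p}) := by
            rw [Finset.inter_union_distrib_left, hAiP', Finset.union_empty]
          have hR : A' i ∩ T' = A i ∩ (T' \ {p}) := by
            rw [hAi']
            ext q
            simp only [Finset.mem_inter, Finset.mem_sdiff, Finset.mem_singleton]
            constructor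
            · rintro ⟨h1, h2⟩
              exact ⟨h1, h2, fun hqp => hpAi i (hqp ▸ h1)⟩
            · rintro ⟨h1, h2, _⟩; exact ⟨h1, h2⟩
          have hsubT0 : A i ∩ (T' \ {p}) ⊆ Pr \ P' := (Finset.inter_subset_right).trans hT0
          rw [hL, hR, hcongr _ hsubT0]
    · simp only [hpT, if_false] at hTdef
      subst hTdef
      have hT0 : T ⊆ Pr \ P' := by
        intro q hq
        rcases Finset.mem_union.mp (hT' hq) with h | h
        · exact h
        · exact absurd (Finset.mem_singleton.mp h ▸ hq) hpT
      refine ⟨fun q hq => (Finset.mem_sdiff.mp (hT0 hq)).1, (hcongr _ hT0).symm, ?_⟩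
      unfold minUtil
      refine Finset.inf'_congr _ rfl fun i _ => ?_
      have hAeq : A' i ∩ T = A i ∩ T := by
        by_cases hsub : P' ⊆ A i
        · rw [hA' i, if_pos hsub]
          ext q
          simp only [Finset.mem_inter, Finset.mem_union, Finset.mem_sdiff,
            Finset.mem_singleton]
          constructor
          · rintro ⟨hq1 | hq1, hq2⟩
            · exact ⟨hq1.1, hq2⟩
            · exact absurd (hq1 ▸ hq2) hpT
          · rintro ⟨h1, h2⟩
            exact ⟨Or.inl ⟨h1, (Finset.mem_sdiff.mp (hT0 h2)).2⟩, h2⟩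
        · rw [hA' i, if_neg hsub]
      have hsubT0 : A i ∩ T ⊆ Pr \ P' := (Finset.inter_subset_right).trans hT0
      rw [hAeq, hcongr _ hsubT0]
  -- the candidate winning set
  set S' : Finset U := (S \ P') ∪ {p} with hS'def
  have hpS' : p ∈ S' := Finset.mem_union_right _ (Finset.mem_singleton_self p)
  have hS'sub : S' ⊆ (Pr \ P') ∪ {p} := by
    intro q hq
    rcases Finset.mem_union.mp hq with h | h
    · obtain ⟨h1, h2⟩ := Finset.mem_sdiff.mp h
      exact Finset.mem_union_left _ (Finset.mem_sdiff.mpr ⟨hSPr h1, h2⟩)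
    · exact Finset.mem_union_right _ h
  have hback : S = (if p ∈ S' then (S' \ {p}) ∪ P' else S') := by
    rw [if_pos hpS']
    have h1 : S' \ {p} = S \ P' := by
      rw [hS'def, Finset.union_sdiff_right]
      apply Finset.sdiff_eq_self_of_disjoint
      exact Finset.disjoint_singleton_right.mpr
        (fun h => hpS (Finset.mem_sdiff.mp h).1)
    rw [h1, Finset.sdiff_union_of_subset hP'S]
  obtain ⟨_, hcostS, hminS⟩ := key S' S hS'sub hback
  refine ⟨S', ⟨hS'sub, ?_, ?_⟩, hpS'⟩
  · rw [← hcostS]; exact hSb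
  · intro T' hT'sub hT'cost
    obtain ⟨hTsub, hTcost, hTmin⟩ :=
      key T' (if p ∈ T' then (T' \ {p}) ∪ P' else T') hT'sub rfl
    rw [← hTmin, ← hminS]
    exact hSopt _ hTsub (hTcost ▸ hT'cost)
end

section
/- The rule R_{‖·‖} (the distance-disutility minimizing PB rule for projects with multiple permissible costs) is range-abiding and range-unanimous. Range-abidingness: for every instance, every allocation x selected by R_{‖·‖} (i.e., minimizing total disutility among valid allocations), and every project j with τ_j ≠ ∅, we have x_j ≤ τ̄_j. Range-unanimity: if τ_j ≠ ∅ for every project j and Σ_j τ̄_j ≤ b, then the allocation (τ̄_1, …, τ̄_m) is selected by R_{‖·‖}. -/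
variable {N : Type*}

/-- A valid budget allocation: each project gets one of its permissible costs, and the
total allocated amount is within the budget. -/
def validAlloc {m : ℕ} (C : Fin m → Finset ℕ) (b : ℕ) (x : Fin m → ℕ) : Prop :=
  (∀ j, x j ∈ C j) ∧ ∑ j, x j ≤ b

/-- Distance disutility of voter `i` at allocation `x`, given reported bounds `lo`, `hi`. -/
def distDisutil {m : ℕ} (lo hi : N → Fin m → ℕ) (i : N) (x : Fin m → ℕ) : ℕ :=
  ∑ j, (if x j < lo i j then lo i j - x j else if x j ≤ hi i j then 0 else x j - hi i j)

/-- The rule `R_{‖·‖}` selects exactly the valid allocations minimizing total distance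
disutility. -/
def selectedDist [Fintype N] {m : ℕ} (C : Fin m → Finset ℕ) (b : ℕ)
    (lo hi : N → Fin m → ℕ) (x : Fin m → ℕ) : Prop :=
  validAlloc C b x ∧ ∀ y : Fin m → ℕ, validAlloc C b y →
    ∑ i : N, distDisutil lo hi i x ≤ ∑ i : N, distDisutil lo hi i y

/-- The set `τ_j` of unanimously approved costs of project `j`. -/
def unanimousCosts [Fintype N] {m : ℕ} (C : Fin m → Finset ℕ) (lo hi : N → Fin m → ℕ)
    (j : Fin m) : Finset ℕ :=
  (C j).filter fun v => ∀ i : N, lo i j ≤ v ∧ v ≤ hi i j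

/-- The distance-disutility minimizing rule `R_{‖·‖}` is range-abiding and
range-unanimous. -/
theorem stmt_10 [Fintype N] [Nonempty N] {m : ℕ}
    (C : Fin m → Finset ℕ) (hC0 : ∀ j, 0 ∈ C j) (b : ℕ)
    (lo hi : N → Fin m → ℕ)
    (hlC : ∀ i j, lo i j ∈ C j) (hhC : ∀ i j, hi i j ∈ C j)
    (hlh : ∀ i j, lo i j ≤ hi i j) :
    (∀ x : Fin m → ℕ, selectedDist C b lo hi x →
      ∀ (j : Fin m) (hne : (unanimousCosts C lo hi j).Nonempty),
        x j ≤ (unanimousCosts C lo hi j).max' hne) ∧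
    (∀ hne : ∀ j, (unanimousCosts C lo hi j).Nonempty,
      (∑ j, (unanimousCosts C lo hi j).max' (hne j)) ≤ b →
        selectedDist C b lo hi fun j => (unanimousCosts C lo hi j).max' (hne j)) := by
  constructor
  · rintro x ⟨hxv, hxmin⟩ j hne
    by_contra h
    push_neg at h
    set τ := (unanimousCosts C lo hi j).max' hne with hτ
    have hτmem : τ ∈ unanimousCosts C lo hi j := Finset.max'_mem _ hne
    rw [unanimousCosts, Finset.mem_filter] at hτmem
    obtain ⟨hτC, hτb⟩ := hτmem
    set y := Function.update x j τ with hy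
    have hyj : y j = τ := by simp [hy]
    have hyne : ∀ j', j' ≠ j → y j' = x j' := fun j' hj' => Function.update_of_ne hj' _ _
    have hyv : validAlloc C b y := by
      constructor
      · intro j'
        by_cases hjj : j' = j
        · subst hjj; rw [hyj]; exact hτC
        · rw [hyne j' hjj]; exact hxv.1 j'
      · calc ∑ j', y j' ≤ ∑ j', x j' := by
              apply Finset.sum_le_sum
              intro j' _
              by_cases hjj : j' = j
              · subst hjj; rw [hyj]; omega
              · rw [hyne j' hjj]
            _ ≤ b := hxv.2
    have hxnot : x j ∉ unanimousCosts C lo hi j := by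
      intro hmem
      exact absurd (Finset.le_max' _ _ hmem) (by omega)
    rw [unanimousCosts, Finset.mem_filter] at hxnot
    push_neg at hxnot
    obtain ⟨i₀, hi₀⟩ := hxnot (hxv.1 j)
    have hhi₀ : hi i₀ j < x j := by
      have h1 := (hτb i₀).1
      have h2 := (hτb i₀).2
      omega
    have hle : ∀ i : N, distDisutil lo hi i y ≤ distDisutil lo hi i x := by
      intro i
      unfold distDisutil
      apply Finset.sum_le_sum
      intro j' _
      by_cases hjj : j' = j
      · subst hjj
        have h1 := (hτb i).1
        have h2 := (hτb i).2
        rw [hyj]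
        split_ifs <;> omega
      · rw [hyne j' hjj]
    have hlt : ∑ i : N, distDisutil lo hi i y < ∑ i : N, distDisutil lo hi i x := by
      apply Finset.sum_lt_sum (fun i _ => hle i)
      refine ⟨i₀, Finset.mem_univ i₀, ?_⟩
      unfold distDisutil
      apply Finset.sum_lt_sum
      · intro j' _
        by_cases hjj : j' = j
        · subst hjj
          have h1 := (hτb i₀).1
          have h2 := (hτb i₀).2
          rw [hyj]
          split_ifs <;> omega
        · rw [hyne j' hjj]
      · refine ⟨j, Finset.mem_univ j, ?_⟩
        have h1 := (hτb i₀).1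
        have h2 := (hτb i₀).2
        rw [hyj]
        split_ifs <;> omega
    exact absurd (hxmin y hyv) (by omega)
  · intro hne hb
    have hd0 : ∀ i : N,
        distDisutil lo hi i (fun j => (unanimousCosts C lo hi j).max' (hne j)) = 0 := by
      intro i
      unfold distDisutil
      apply Finset.sum_eq_zero
      intro j _
      have hmem := Finset.max'_mem _ (hne j)
      simp only [unanimousCosts, Finset.mem_filter] at hmem
      have h1 := (hmem.2 i).1
      have h2 := (hmem.2 i).2
      have h1' : lo i j ≤ (unanimousCosts C lo hi j).max' (hne j) := h1
      have h2' : (unanimousCosts C lo hi j).max' (hne j) ≤ hi i j := h2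
      beta_reduce
      split_ifs <;> omega
    refine ⟨⟨fun j => ?_, hb⟩, fun y hy => ?_⟩
    · have hmem := Finset.max'_mem _ (hne j)
      simp only [unanimousCosts, Finset.mem_filter] at hmem
      exact hmem.1
    · simp [hd0]
end

section
/- The rule R_{|S|} (the cardinal-utility maximizing PB rule for projects with multiple permissible costs) is range-abiding and range-unanimous on instances where the unanimously approved cost sets contain positive costs. Range-abidingness: for every instance, every allocation x selected by R_{|S|} (i.e., maximizing total cardinal utility among valid allocations), and every project j such that τ_j contains a positive cost, we have x_j ≤ τ̄_j. Range-unanimity: if for every project j the set τ_j contains a positive cost and Σ_j τ̄_j ≤ b, then the allocation (τ̄_1, …, τ̄_m) is selected by R_{|S|}. -/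
variable {N : Type*}

/-- Cardinal utility of voter `i` at allocation `x`: the number of funded projects whose
allocated cost falls within the bounds reported by `i`. -/
def cardUtil {m : ℕ} (lo hi : N → Fin m → ℕ) (i : N) (x : Fin m → ℕ) : ℕ :=
  (Finset.univ.filter fun j : Fin m => x j ≠ 0 ∧ lo i j ≤ x j ∧ x j ≤ hi i j).card

/-- The rule `R_{|S|}` selects exactly the valid allocations maximizing total cardinal
utility. -/
def selectedCard [Fintype N] {m : ℕ} (C : Fin m → Finset ℕ) (b : ℕ)
    (lo hi : N → Fin m → ℕ) (x : Fin m → ℕ) : Prop :=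
  validAlloc C b x ∧ ∀ y : Fin m → ℕ, validAlloc C b y →
    ∑ i : N, cardUtil lo hi i y ≤ ∑ i : N, cardUtil lo hi i x

/-- The cardinal-utility maximizing rule `R_{|S|}` is range-abiding and range-unanimous,
on instances where the unanimously approved cost sets contain positive costs. -/
theorem stmt_11 [Fintype N] [Nonempty N] {m : ℕ}
    (C : Fin m → Finset ℕ) (hC0 : ∀ j, 0 ∈ C j) (b : ℕ)
    (lo hi : N → Fin m → ℕ)
    (hlC : ∀ i j, lo i j ∈ C j) (hhC : ∀ i j, hi i j ∈ C j)
    (hlh : ∀ i j, lo i j ≤ hi i j) :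
    (∀ x : Fin m → ℕ, selectedCard C b lo hi x →
      ∀ (j : Fin m) (hne : (unanimousCosts C lo hi j).Nonempty),
        (∃ v ∈ unanimousCosts C lo hi j, 0 < v) →
          x j ≤ (unanimousCosts C lo hi j).max' hne) ∧
    (∀ hne : ∀ j, (unanimousCosts C lo hi j).Nonempty,
      (∀ j, ∃ v ∈ unanimousCosts C lo hi j, 0 < v) →
        (∑ j, (unanimousCosts C lo hi j).max' (hne j)) ≤ b →
          selectedCard C b lo hi fun j => (unanimousCosts C lo hi j).max' (hne j)) := by
  constructor
  · intro x hx j hne hpos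
    by_contra hgt
    push_neg at hgt
    set τ := (unanimousCosts C lo hi j).max' hne with hτdef
    have hτmem : τ ∈ unanimousCosts C lo hi j := Finset.max'_mem _ hne
    obtain ⟨v, hv, hv0⟩ := hpos
    have hτpos : 0 < τ := lt_of_lt_of_le hv0 (Finset.le_max' _ v hv)
    rw [unanimousCosts, Finset.mem_filter] at hτmem
    have hnu : ¬ ∀ i : N, lo i j ≤ x j ∧ x j ≤ hi i j := by
      intro h
      have hmem : x j ∈ unanimousCosts C lo hi j :=
        Finset.mem_filter.mpr ⟨hx.1.1 j, h⟩
      exact absurd (Finset.le_max' _ _ hmem) (not_le.mpr hgt)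
    push_neg at hnu
    obtain ⟨i₀, hi₀⟩ := hnu
    set y := Function.update x j τ with hy
    have hyj : y j = τ := Function.update_self j τ x
    have hyk : ∀ k, k ≠ j → y k = x k := fun k hk => Function.update_of_ne hk τ x
    have hyvalid : validAlloc C b y := by
      constructor
      · intro k
        by_cases hk : k = j
        · subst hk; rw [hyj]; exact hτmem.1
        · rw [hyk k hk]; exact hx.1.1 k
      · calc ∑ k, y k ≤ ∑ k, x k := by
              apply Finset.sum_le_sum
              intro k _
              by_cases hk : k = j
              · subst hk; rw [hyj]; exact le_of_lt hgt
              · rw [hyk k hk]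
            _ ≤ b := hx.1.2
    have hlt : ∑ i : N, cardUtil lo hi i x < ∑ i : N, cardUtil lo hi i y := by
      have hrw : ∀ (z : Fin m → ℕ),
          ∑ i : N, cardUtil lo hi i z =
          ∑ k : Fin m, ∑ i : N,
            (if z k ≠ 0 ∧ lo i k ≤ z k ∧ z k ≤ hi i k then 1 else 0) := by
        intro z
        rw [Finset.sum_comm]
        refine Finset.sum_congr rfl fun i _ => ?_
        rw [cardUtil, Finset.card_filter]
      rw [hrw, hrw]
      have key : ∀ i : N,
          (if y j ≠ 0 ∧ lo i j ≤ y j ∧ y j ≤ hi i j then (1:ℕ) else 0) = 1 := by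
        intro i; rw [hyj]; exact if_pos ⟨hτpos.ne', hτmem.2 i⟩
      apply Finset.sum_lt_sum
      · intro k _
        by_cases hk : k = j
        · subst hk
          refine Finset.sum_le_sum fun i _ => ?_
          rw [key i]
          split_ifs <;> omega
        · simp [hyk k hk]
      · refine ⟨j, Finset.mem_univ j, ?_⟩
        apply Finset.sum_lt_sum
        · intro i _
          rw [key i]
          split_ifs <;> omega
        · refine ⟨i₀, Finset.mem_univ i₀, ?_⟩
          have h1 : (if x j ≠ 0 ∧ lo i₀ j ≤ x j ∧ x j ≤ hi i₀ j then (1:ℕ) else 0) = 0 := by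
            apply if_neg
            rintro ⟨-, h2, h3⟩
            exact absurd h3 (not_le.mpr (hi₀ h2))
          rw [h1, key i₀]
          omega
    exact absurd (hx.2 y hyvalid) (not_le.mpr hlt)
  · intro hne hpos hb
    set y := fun j => (unanimousCosts C lo hi j).max' (hne j) with hy
    have hτ : ∀ j, y j ∈ unanimousCosts C lo hi j := fun j => Finset.max'_mem _ _
    refine ⟨⟨fun j => (Finset.mem_filter.mp (hτ j)).1, hb⟩, fun z hz => ?_⟩
    have hmax : ∀ i : N, cardUtil lo hi i y = m := by
      intro i
      have hfil : (Finset.univ.filter fun j : Fin m =>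
          y j ≠ 0 ∧ lo i j ≤ y j ∧ y j ≤ hi i j) = Finset.univ := by
        apply Finset.filter_true_of_mem
        intro j _
        obtain ⟨v, hv, hv0⟩ := hpos j
        have hpos' : 0 < y j := lt_of_lt_of_le hv0 (Finset.le_max' _ v hv)
        exact ⟨hpos'.ne', (Finset.mem_filter.mp (hτ j)).2 i⟩
      rw [cardUtil, hfil, Finset.card_univ, Fintype.card_fin]
    calc ∑ i : N, cardUtil lo hi i z ≤ ∑ i : N, m := by
          apply Finset.sum_le_sum
          intro i _
          have := Finset.card_filter_le Finset.univ
            (fun j : Fin m => z j ≠ 0 ∧ lo i j ≤ z j ∧ z j ≤ hi i j)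
          simpa [cardUtil, Finset.card_univ] using this
      _ = ∑ i : N, cardUtil lo hi i y := by
          refine Finset.sum_congr rfl fun i _ => (hmax i).symm
end

section
/- The PB-CC rule satisfies discount monotonicity: let I be a PB instance under weakly ordinal preferences, and let x ∈ W(I) with c(x) ≥ 2. Let I′ be obtained from I by reducing the cost of x by 1 (all else unchanged). Then x ∈ W(I′). -/
open Classical in
/-- The rank of project `p` for a voter with weak order `R`: one plus the number of
projects strictly preferred to `p`. -/
noncomputable def rankOf {P : Type*} [Fintype P] (R : P → P → Prop) (p : P) : ℕ :=
  1 + (Finset.univ.filter fun q => R q p ∧ ¬ R p q).card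

/-- The minimum rank (for preference `R`) of a project in `S`; `Fintype.card P` if `S`
is empty. -/
noncomputable def minRank {P : Type*} [Fintype P] (R : P → P → Prop) (S : Finset P) : ℕ :=
  if h : S.Nonempty then S.inf' h (rankOf R) else Fintype.card P

/-- The Chamberlin–Courant score of `S`: `Σ_i (m − min_{p∈S} r_i(p))`. -/
noncomputable def ccScore {N P : Type*} [Fintype N] [Fintype P]
    (R : N → P → P → Prop) (S : Finset P) : ℕ :=
  ∑ i : N, (Fintype.card P - minRank (R i) S)

/-- `S` is selected by the PB-CC rule: it is a nonempty feasible set maximizing the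
Chamberlin–Courant score among nonempty feasible sets. -/
def PBCCsel {N P : Type*} [Fintype N] [Fintype P] (c : P → ℕ) (b : ℕ)
    (R : N → P → P → Prop) (S : Finset P) : Prop :=
  S.Nonempty ∧ (∑ p ∈ S, c p) ≤ b ∧
    ∀ T : Finset P, T.Nonempty → (∑ p ∈ T, c p) ≤ b → ccScore R T ≤ ccScore R S

/-- Project `p` wins under PB-CC: it belongs to some selected set. -/
def winsCC {N P : Type*} [Fintype N] [Fintype P] (c : P → ℕ) (b : ℕ)
    (R : N → P → P → Prop) (p : P) : Prop :=
  ∃ S : Finset P, PBCCsel c b R S ∧ p ∈ S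

/-- Discount monotonicity of the PB-CC rule: a winning project of cost at least 2 keeps
winning after its cost is reduced by 1. -/
theorem stmt_13 {N P : Type*} [Fintype N] [Nonempty N] [Fintype P] [DecidableEq P]
    (c : P → ℕ) (hc : ∀ p, 0 < c p) (b : ℕ)
    (R : N → P → P → Prop)
    (htotal : ∀ i p q, R i p q ∨ R i q p)
    (htrans : ∀ i, Transitive (R i))
    (hafford : ∃ p, c p ≤ b)
    (x : P) (hx : winsCC c b R x) (hcx : 2 ≤ c x) :
    winsCC (Function.update c x (c x - 1)) b R x := by
  classical
  obtain ⟨S, ⟨hSne, hSfeas, hSmax⟩, hxS⟩ := hx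
  set c' : P → ℕ := Function.update c x (c x - 1) with hc'
  have hc'le : ∀ p, c' p ≤ c p := by
    intro p
    by_cases hp : p = x
    · subst hp; simp only [c', Function.update_self]; omega
    · simp [c', Function.update_of_ne hp]
  -- sum under c' ≤ sum under c
  have hsum_le : ∀ T : Finset P, (∑ p ∈ T, c' p) ≤ ∑ p ∈ T, c p :=
    fun T => Finset.sum_le_sum fun p _ => hc'le p
  have hsum_eq : ∀ T : Finset P, x ∉ T → (∑ p ∈ T, c' p) = ∑ p ∈ T, c p := by
    intro T hxT
    refine Finset.sum_congr rfl fun p hp => ?_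
    have : p ≠ x := fun h => hxT (h ▸ hp)
    simp [c', Function.update_of_ne this]
  -- the set of nonempty c'-feasible sets
  set F : Finset (Finset P) :=
    Finset.univ.filter (fun T => T.Nonempty ∧ (∑ p ∈ T, c' p) ≤ b) with hF
  have hSF : S ∈ F := by
    simp only [hF, Finset.mem_filter, Finset.mem_univ, true_and]
    exact ⟨hSne, le_trans (hsum_le S) hSfeas⟩
  obtain ⟨T, hTF, hTmax⟩ := F.exists_max_image (ccScore R) ⟨S, hSF⟩
  simp only [hF, Finset.mem_filter, Finset.mem_univ, true_and] at hTF
  obtain ⟨hTne, hTfeas⟩ := hTF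
  by_cases hxT : x ∈ T
  · exact ⟨T, ⟨hTne, hTfeas, fun U hUne hUfeas => by
      apply hTmax
      simp only [hF, Finset.mem_filter, Finset.mem_univ, true_and]
      exact ⟨hUne, hUfeas⟩⟩, hxT⟩
  · -- T is feasible under c, so score T ≤ score S; S works
    have hTc : (∑ p ∈ T, c p) ≤ b := by rw [← hsum_eq T hxT]; exact hTfeas
    have hTS : ccScore R T ≤ ccScore R S := hSmax T hTne hTc
    refine ⟨S, ⟨hSne, le_trans (hsum_le S) hSfeas, fun U hUne hUfeas => ?_⟩, hxS⟩
    refine le_trans ?_ hTS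
    apply hTmax
    simp only [hF, Finset.mem_filter, Finset.mem_univ, true_and]
    exact ⟨hUne, hUfeas⟩
end

section
/- The PB-CC rule satisfies candidate monotonicity: let I be a PB instance under weakly ordinal preferences and x ∈ W(I). Let i be a voter, let E^i_1 ≻_i E^i_2 ≻_i ⋯ be the indifference classes of ⪰_i, suppose x ∈ E^i_j for some j ≥ 2 and x′ ∈ E^i_{j−1}, and let I′ be obtained from I by exchanging the positions of x and x′ in ⪰_i (all other voters' preferences, costs, and budget unchanged). Then x ∈ W(I′). -/
open Classical in
/-- Auxiliary: ranks after composing a preference with a permutation of the projects. -/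
lemma rank_comp {P : Type*} [Fintype P] [DecidableEq P] (R : P → P → Prop)
    (σ : Equiv.Perm P) (R' : P → P → Prop) (h : ∀ p q, R' p q ↔ R (σ p) (σ q)) (p : P) :
    rankOf R' p = rankOf R (σ p) := by
  unfold rankOf
  congr 1
  rw [← Finset.card_image_of_injective
    (Finset.univ.filter fun q => R' q p ∧ ¬ R' p q) σ.injective]
  congr 1
  ext q
  simp only [Finset.mem_image, Finset.mem_filter, Finset.mem_univ, true_and, h]
  constructor
  · rintro ⟨a, ha, rfl⟩; exact ha
  · intro hq; exact ⟨σ.symm q, by simpa using hq, by simp⟩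

/-- Candidate monotonicity of the PB-CC rule: if a winning project `x` is exchanged, in
the preference of a single voter `i`, with a project `x'` lying in the indifference
class immediately above the class of `x`, then `x` still wins in the new instance. -/
theorem stmt_14 {N P : Type*} [Fintype N] [Nonempty N] [Fintype P] [DecidableEq P]
    (c : P → ℕ) (hc : ∀ p, 0 < c p) (b : ℕ)
    (R : N → P → P → Prop)
    (htotal : ∀ i p q, R i p q ∨ R i q p)
    (htrans : ∀ i, Transitive (R i))
    (hafford : ∃ p, c p ≤ b)
    (x : P) (hx : winsCC c b R x)
    (i : N) (x' : P)
    (hstrict : R i x' x ∧ ¬ R i x x')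
    (hadj : ∀ z : P, ¬ ((R i x' z ∧ ¬ R i z x') ∧ (R i z x ∧ ¬ R i x z)))
    (R' : N → P → P → Prop)
    (hR'i : ∀ p q, R' i p q ↔ R i (Equiv.swap x x' p) (Equiv.swap x x' q))
    (hR'other : ∀ k, k ≠ i → R' k = R k) :
    winsCC c b R' x := by
  classical
  obtain ⟨S₀, hS₀sel, hxS₀⟩ := hx
  have hσx : Equiv.swap x x' x = x' := Equiv.swap_apply_left x x'
  have hσx' : Equiv.swap x x' x' = x := Equiv.swap_apply_right x x'
  have hrank : ∀ p, rankOf (R' i) p = rankOf (R i) (Equiv.swap x x' p) :=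
    rank_comp (R i) (Equiv.swap x x') (R' i) hR'i
  -- x' has rank at most that of x for voter i
  have hfxx' : rankOf (R i) x' ≤ rankOf (R i) x := by
    apply Nat.add_le_add_left
    apply Finset.card_le_card
    intro q hq
    simp only [Finset.mem_filter, Finset.mem_univ, true_and] at hq ⊢
    obtain ⟨h1, h2⟩ := hq
    exact ⟨htrans i h1 hstrict.1, fun hxq => h2 (htrans i hstrict.1 hxq)⟩
  -- if x ∉ T, voter i's min rank can only grow after the swap
  have hminA : ∀ T : Finset P, x ∉ T → minRank (R i) T ≤ minRank (R' i) T := by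
    intro T hxT
    unfold minRank
    split_ifs with h
    · apply Finset.le_inf'
      intro p hp
      rw [hrank]
      by_cases hpx' : p = x'
      · subst hpx'
        rw [hσx']
        exact le_trans (Finset.inf'_le _ hp) hfxx'
      · rw [Equiv.swap_apply_of_ne_of_ne (by rintro rfl; exact hxT hp) hpx']
        exact Finset.inf'_le _ hp
    · exact le_rfl
  -- if x ∈ T, voter i's min rank can only shrink after the swap
  have hminB : ∀ T : Finset P, x ∈ T → minRank (R' i) T ≤ minRank (R i) T := by
    intro T hxT
    have hT : T.Nonempty := ⟨x, hxT⟩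
    unfold minRank
    rw [dif_pos hT, dif_pos hT]
    apply Finset.le_inf'
    intro p hp
    by_cases hpx : p = x
    · calc T.inf' hT (rankOf (R' i)) ≤ rankOf (R' i) p := Finset.inf'_le _ hp
        _ = rankOf (R i) x' := by rw [hrank, hpx, hσx]
        _ ≤ rankOf (R i) x := hfxx'
        _ = rankOf (R i) p := by rw [hpx]
    · by_cases hpx' : p = x'
      · calc T.inf' hT (rankOf (R' i)) ≤ rankOf (R' i) x := Finset.inf'_le _ hxT
          _ = rankOf (R i) x' := by rw [hrank, hσx]
          _ = rankOf (R i) p := by rw [hpx']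
      · calc T.inf' hT (rankOf (R' i)) ≤ rankOf (R' i) p := Finset.inf'_le _ hp
          _ = rankOf (R i) p := by rw [hrank, Equiv.swap_apply_of_ne_of_ne hpx hpx']
  -- score comparisons
  have hccA : ∀ T : Finset P, x ∉ T → ccScore R' T ≤ ccScore R T := by
    intro T hxT
    apply Finset.sum_le_sum
    intro k _
    by_cases hk : k = i
    · subst hk; exact Nat.sub_le_sub_left (hminA T hxT) _
    · rw [hR'other k hk]
  have hccB : ∀ T : Finset P, x ∈ T → ccScore R T ≤ ccScore R' T := by
    intro T hxT
    apply Finset.sum_le_sum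
    intro k _
    by_cases hk : k = i
    · subst hk; exact Nat.sub_le_sub_left (hminB T hxT) _
    · rw [hR'other k hk]
  -- pick a maximizer under R'
  obtain ⟨p₀, hp₀⟩ := hafford
  obtain ⟨S, hSmem, hSmax⟩ :=
    Finset.exists_max_image
      ((Finset.univ : Finset (Finset P)).filter fun T => T.Nonempty ∧ ∑ p ∈ T, c p ≤ b)
      (ccScore R') ⟨{p₀}, by simp [Finset.mem_filter, hp₀]⟩
  rw [Finset.mem_filter] at hSmem
  obtain ⟨-, hSne, hSb⟩ := hSmem
  have hSmax' : ∀ T : Finset P, T.Nonempty → (∑ p ∈ T, c p) ≤ b →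
      ccScore R' T ≤ ccScore R' S := by
    intro T h1 h2
    exact hSmax T (by simp [Finset.mem_filter, h1, h2])
  by_cases hxS : x ∈ S
  · exact ⟨S, ⟨hSne, hSb, hSmax'⟩, hxS⟩
  · refine ⟨S₀, ⟨hS₀sel.1, hS₀sel.2.1, ?_⟩, hxS₀⟩
    intro T hTne hTb
    calc ccScore R' T ≤ ccScore R' S := hSmax' T hTne hTb
      _ ≤ ccScore R S := hccA S hxS
      _ ≤ ccScore R S₀ := hS₀sel.2.2 S hSne hSb
      _ ≤ ccScore R' S₀ := hccB S₀ hxS₀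
end

section
/- The PB-CC rule satisfies pro-affordability: let I be a PB instance under weakly ordinal preferences, x ∈ W(I), and x′ ∈ P a project with c(x′) < c(x) and x′ ⪰_i x for every voter i. Then x′ ∈ W(I). -/
open Classical in
lemma rankOf_mono {P : Type*} [Fintype P] (R : P → P → Prop)
    (htrans : Transitive R) (x x' : P) (h : R x' x) :
    rankOf R x' ≤ rankOf R x := by
  unfold rankOf
  gcongr 1 + ?_
  apply Finset.card_le_card
  intro q hq
  simp only [Finset.mem_filter, Finset.mem_univ, true_and] at hq ⊢
  refine ⟨htrans hq.1 h, fun hxq => hq.2 (htrans h hxq)⟩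

/-- Pro-affordability of the PB-CC rule: if `x` wins, `x'` is cheaper than `x`, and
every voter weakly prefers `x'` to `x`, then `x'` also wins. -/
theorem stmt_15 {N P : Type*} [Fintype N] [Nonempty N] [Fintype P] [DecidableEq P]
    (c : P → ℕ) (hc : ∀ p, 0 < c p) (b : ℕ)
    (R : N → P → P → Prop)
    (htotal : ∀ i p q, R i p q ∨ R i q p)
    (htrans : ∀ i, Transitive (R i))
    (hafford : ∃ p, c p ≤ b)
    (x : P) (hx : winsCC c b R x)
    (x' : P) (hcost : c x' < c x) (hpref : ∀ i, R i x' x) :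
    winsCC c b R x' := by
  obtain ⟨S, ⟨hSne, hSfeas, hSmax⟩, hxS⟩ := hx
  by_cases hx'S : x' ∈ S
  · exact ⟨S, ⟨hSne, hSfeas, hSmax⟩, hx'S⟩
  set S' : Finset P := insert x' (S.erase x) with hS'
  have hne' : S'.Nonempty := ⟨x', Finset.mem_insert_self _ _⟩
  have hx'er : x' ∉ S.erase x := fun h => hx'S (Finset.mem_of_mem_erase h)
  have hfeas' : (∑ p ∈ S', c p) ≤ b := by
    have : (∑ p ∈ S', c p) = c x' + ∑ p ∈ S.erase x, c p :=
      Finset.sum_insert hx'er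
    have h2 : (∑ p ∈ S, c p) = c x + ∑ p ∈ S.erase x, c p :=
      (Finset.add_sum_erase S c hxS).symm
    omega
  have hmin : ∀ i, minRank (R i) S' ≤ minRank (R i) S := by
    intro i
    unfold minRank
    rw [dif_pos hne', dif_pos hSne]
    obtain ⟨p, hp, hpeq⟩ := Finset.exists_mem_eq_inf' hSne (rankOf (R i))
    rw [hpeq]
    by_cases hpx : p = x
    · calc S'.inf' hne' (rankOf (R i)) ≤ rankOf (R i) x' :=
            Finset.inf'_le _ (Finset.mem_insert_self _ _)
        _ ≤ rankOf (R i) p := by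
            rw [hpx]; exact rankOf_mono (R i) (htrans i) x x' (hpref i)
    · exact Finset.inf'_le _ (Finset.mem_insert_of_mem (Finset.mem_erase.mpr ⟨hpx, hp⟩))
  have hscore : ccScore R S ≤ ccScore R S' := by
    unfold ccScore
    exact Finset.sum_le_sum fun i _ => Nat.sub_le_sub_left (hmin i) _
  refine ⟨S', ⟨hne', hfeas', fun T hT hTfeas => le_trans (hSmax T hT hTfeas) hscore⟩,
    Finset.mem_insert_self _ _⟩
end

section
/- The PB-CC rule does not satisfy limit monotonicity: there exists a PB instance I under weakly ordinal preferences in which no project costs exactly b+1 and a project x ∈ W(I) such that x ∉ W(I′), where I′ is obtained from I by increasing the budget to b+1. (For instance, take b = 1, three projects of unit cost each, and two voters with opposite strict rankings: the middle project wins at budget 1 but loses at budget 2.) -/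
/-- Two voters with opposite strict rankings over three projects. -/
def myR : Fin 2 → Fin 3 → Fin 3 → Prop := fun i p q => if i = 0 then p ≤ q else q ≤ p

lemma rank0 : rankOf (myR 0) = ![1,2,3] := by
  funext p
  fin_cases p <;> · simp only [rankOf, myR]; rw [Finset.filter_congr_decidable]; decide

lemma rank1 : rankOf (myR 1) = ![3,2,1] := by
  funext p
  fin_cases p <;> · simp only [rankOf, myR]; rw [Finset.filter_congr_decidable]; decide

lemma cc_eq (S : Finset (Fin 3)) (h : S.Nonempty) :
    ccScore myR S = (3 - S.inf' h ![1,2,3]) + (3 - S.inf' h ![3,2,1]) := by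
  rw [ccScore, Fin.sum_univ_two]
  simp [minRank, h, rank0, rank1]

lemma ccs (p : Fin 3) : ccScore myR {p} = 2 := by
  rw [cc_eq _ (Finset.singleton_nonempty p)]
  fin_cases p <;> simp

lemma cc01 : ccScore myR ({0,1} : Finset (Fin 3)) = 3 := by
  rw [cc_eq _ (by decide)]; simp [Finset.inf'_insert]
lemma cc10 : ccScore myR ({1,0} : Finset (Fin 3)) = 3 := by
  rw [cc_eq _ (by decide)]; simp [Finset.inf'_insert]
lemma cc12 : ccScore myR ({1,2} : Finset (Fin 3)) = 3 := by
  rw [cc_eq _ (by decide)]; simp [Finset.inf'_insert]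
lemma cc21 : ccScore myR ({2,1} : Finset (Fin 3)) = 3 := by
  rw [cc_eq _ (by decide)]; simp [Finset.inf'_insert]
lemma cc02 : ccScore myR ({0,2} : Finset (Fin 3)) = 4 := by
  rw [cc_eq _ (by decide)]; simp [Finset.inf'_insert]

/-- The PB-CC rule does not satisfy limit monotonicity: there is an instance in which no
project costs exactly `b+1` and a winning project that no longer wins when the budget is
increased to `b+1`. -/
theorem stmt_16 :
    ∃ (n m : ℕ) (c : Fin (m + 1) → ℕ) (b : ℕ)
      (R : Fin (n + 1) → Fin (m + 1) → Fin (m + 1) → Prop),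
      (∀ p, 0 < c p) ∧
      (∀ i p q, R i p q ∨ R i q p) ∧
      (∀ i, Transitive (R i)) ∧
      (∃ p, c p ≤ b) ∧
      (∀ p, c p ≠ b + 1) ∧
      ∃ x, winsCC c b R x ∧ ¬ winsCC c (b + 1) R x := by
  refine ⟨1, 2, fun _ => 1, 1, myR, fun _ => one_pos, ?_, ?_, ⟨0, le_refl 1⟩,
    fun _ => by norm_num, 1, ?_, ?_⟩
  · intro i p q
    by_cases hi : i = 0 <;> simp [myR, hi] <;> exact le_total _ _
  · intro i a b c hab hbc
    by_cases hi : i = 0 <;> simp only [myR, hi, if_true, if_false, reduceIte] at * <;>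
      [exact le_trans hab hbc; exact le_trans hbc hab]
  · refine ⟨{1}, ⟨Finset.singleton_nonempty 1, by simp, ?_⟩, by simp⟩
    intro T hT hcost
    have hcard : T.card ≤ 1 := by simpa using hcost
    obtain ⟨p, rfl⟩ := Finset.card_eq_one.mp (le_antisymm hcard hT.card_pos)
    rw [ccs, ccs]
  · rintro ⟨S, ⟨hne, hcost, hmax⟩, hx⟩
    have h4 : 4 ≤ ccScore myR S := cc02 ▸ hmax {0,2} (by decide) (by decide)
    have hcard : S.card ≤ 2 := by simpa using hcost
    have h1 : 1 ≤ S.card := hne.card_pos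
    interval_cases h : S.card
    · obtain ⟨p, rfl⟩ := Finset.card_eq_one.mp h
      rw [ccs] at h4; omega
    · obtain ⟨a, b, hab, rfl⟩ := Finset.card_eq_two.mp h
      fin_cases a <;> fin_cases b
      · exact hab rfl
      · have : (4:ℕ) ≤ 3 := cc01 ▸ (h4 : 4 ≤ ccScore myR ({0,1} : Finset (Fin 3))); omega
      · exact absurd (hx : (1:Fin 3) ∈ ({0,2} : Finset (Fin 3))) (by decide)
      · have : (4:ℕ) ≤ 3 := cc10 ▸ (h4 : 4 ≤ ccScore myR ({1,0} : Finset (Fin 3))); omega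
      · exact hab rfl
      · have : (4:ℕ) ≤ 3 := cc12 ▸ (h4 : 4 ≤ ccScore myR ({1,2} : Finset (Fin 3))); omega
      · exact absurd (hx : (1:Fin 3) ∈ ({2,0} : Finset (Fin 3))) (by decide)
      · have : (4:ℕ) ≤ 3 := cc21 ▸ (h4 : 4 ≤ ccScore myR ({2,1} : Finset (Fin 3))); omega
      · exact hab rfl
end

section
/- Let φ be a median rule with parameters p_1 = β_0 ⊴ β_1 ⊴ ⋯ ⊴ β_{n−1} ⊴ β_n = p_m, mapping each profile P_N ∈ D^n to the median (the (n+1)-st smallest with respect to ◁) of the list of 2n+1 projects (≻_1(1), …, ≻_n(1), β_0, β_1, …, β_n). Let P_N ∈ D^n be a single-peaked profile, i a voter, κ_i ∈ {1,…,m}, and r = |{j ∈ N : ≻_j(1) ⊴ ≻_i(1)}|. If [β_{n−r}, β_{n−r+1}] ∩ U(≻_i(κ_i), ≻_i) ≠ ∅, then φ(P_N) ∈ U(≻_i(κ_i), ≻_i). -/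
/-- Projects `p_1 ◁ ⋯ ◁ p_{m+1}`, identified with `Fin (m+1)` with its natural order. -/
abbrev Proj (m : ℕ) := Fin (m + 1)

/-- A preference (strict linear order) over the projects, encoded as a permutation
sending each project to its rank position (position `0` = top). -/
abbrev Pref (m : ℕ) := Equiv.Perm (Proj m)

/-- The top-ranked project of a preference. -/
def topOf {m : ℕ} (r : Pref m) : Proj m := r.symm 0

/-- Single-peakedness of a preference with respect to the prior order `◁` on projects. -/
def SinglePeaked {m : ℕ} (r : Pref m) : Prop :=
  ∀ p q : Proj m, ((topOf r < p ∧ p < q) ∨ (q < p ∧ p < topOf r)) → r p < r q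

/-- The median rule with parameters `β_0 ⊴ ⋯ ⊴ β_n`: the outcome at a profile is the
`(n+1)`-st smallest (w.r.t. `◁`) of the `2n+1` projects consisting of the `n` voters'
top-ranked projects together with the `n+1` parameters. -/
def medianRule {n m : ℕ} (β : Fin (n + 1) → Proj m)
    (prof : Fin n → Pref m) : Proj m :=
  (Multiset.sort
      ((Finset.univ.val.map fun i => topOf (prof i)) + Finset.univ.val.map β) (· ≤ ·)).getD n 0

-- helper: in a sorted list, if at least k+1 elements are ≤ M, then l[k] ≤ M
lemma sorted_getElem_le {α : Type*} [LinearOrder α] {l : List α}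
    (hs : l.Pairwise (· ≤ ·)) {k : ℕ} (hk : k < l.length) {M : α}
    (h : k + 1 ≤ l.countP (fun x => decide (x ≤ M))) : l[k] ≤ M := by
  by_contra h'
  push_neg at h'
  have hsplit : l.countP (fun x => decide (x ≤ M)) =
      (l.take k).countP (fun x => decide (x ≤ M)) +
      (l.drop k).countP (fun x => decide (x ≤ M)) := by
    conv_lhs => rw [← List.take_append_drop k l]
    exact List.countP_append
  have h1 : (l.take k).countP (fun x => decide (x ≤ M)) ≤ k :=
    le_trans List.countP_le_length (by simp)
  have h2 : (l.drop k).countP (fun x => decide (x ≤ M)) = 0 := by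
    apply List.countP_eq_zero.mpr
    intro a ha
    obtain ⟨j, hj, rfl⟩ := List.mem_iff_getElem.mp ha
    rw [List.getElem_drop]
    simp only [decide_eq_true_eq]
    intro hle
    have hkj : k + j < l.length := by
      have := hj; rw [List.length_drop] at this; omega
    have : l[k] ≤ l[k + j] := by
      have := hs.rel_get_of_le (a := ⟨k, hk⟩) (b := ⟨k + j, hkj⟩) (by simp [Fin.le_def])
      simpa using this
    exact absurd (le_trans this hle) (not_le.mpr h')
  omega

-- helper: in a sorted list, if at least (length - k) elements are ≥ L, then L ≤ l[k]
lemma le_sorted_getElem {α : Type*} [LinearOrder α] {l : List α}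
    (hs : l.Pairwise (· ≤ ·)) {k : ℕ} (hk : k < l.length) {L : α}
    (h : l.length - k ≤ l.countP (fun x => decide (L ≤ x))) : L ≤ l[k] := by
  by_contra h'
  push_neg at h'
  have hsplit : l.countP (fun x => decide (L ≤ x)) =
      (l.take (k+1)).countP (fun x => decide (L ≤ x)) +
      (l.drop (k+1)).countP (fun x => decide (L ≤ x)) := by
    conv_lhs => rw [← List.take_append_drop (k+1) l]
    exact List.countP_append
  have h1 : (l.drop (k+1)).countP (fun x => decide (L ≤ x)) ≤ l.length - (k+1) :=
    le_trans List.countP_le_length (by simp)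
  have h2 : (l.take (k+1)).countP (fun x => decide (L ≤ x)) = 0 := by
    apply List.countP_eq_zero.mpr
    intro a ha
    obtain ⟨j, hj, rfl⟩ := List.mem_iff_getElem.mp ha
    have hj' : j < l.length := lt_of_lt_of_le hj (by simp [List.length_take])
    rw [List.getElem_take]
    simp only [decide_eq_true_eq]
    intro hle
    have hjk : j ≤ k := by
      have := hj; rw [List.length_take] at this; omega
    have : l[j] ≤ l[k] := by
      have := hs.rel_get_of_le (a := ⟨j, hj'⟩) (b := ⟨k, hk⟩) (by simp [Fin.le_def]; omega)
      simpa using this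
    exact absurd (le_trans hle this) (not_le.mpr h')
  omega

lemma beta_count_le {N M : ℕ} (β : Fin (N+1) → Fin (M+1)) (hmono : Monotone β)
    (a : ℕ) (ha : a < N + 1) :
    a + 1 ≤ (Finset.univ.filter fun k : Fin (N+1) => β k ≤ β ⟨a, ha⟩).card := by
  have hsub : Finset.Iic (⟨a, ha⟩ : Fin (N+1)) ⊆
      (Finset.univ.filter fun k : Fin (N+1) => β k ≤ β ⟨a, ha⟩) := by
    intro k hk
    simp only [Finset.mem_Iic] at hk
    simp only [Finset.mem_filter, Finset.mem_univ, true_and]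
    exact hmono hk
  have := Finset.card_le_card hsub
  rw [Fin.card_Iic] at this
  simpa using this


set_option maxHeartbeats 1000000

/-- For a median rule `φ`, a single-peaked profile, a voter `i`, and
`r = |{j : top_j ⊴ top_i}|`: if the interval `[β_{n−r}, β_{n−r+1}]` meets the upper
contour set `U(≻_i(κ), ≻_i)` of the `κ`-th ranked project of voter `i`, then the outcome
of the median rule lies in `U(≻_i(κ), ≻_i)`. -/
theorem stmt_19 {n m : ℕ} (hn : 2 ≤ n)
    (β : Fin (n + 1) → Proj m)
    (hβ0 : β 0 = 0) (hβlast : β (Fin.last n) = Fin.last m)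
    (hβmono : Monotone β)
    (prof : Fin n → Pref m)
    (hsp : ∀ i, SinglePeaked (prof i))
    (i : Fin n) (κ : ℕ) (hκ1 : 1 ≤ κ) (hκm : κ ≤ m + 1)
    (r : ℕ)
    (hr : r = (Finset.univ.filter fun j => topOf (prof j) ≤ topOf (prof i)).card)
    (hr1 : 1 ≤ r) (hrn : r ≤ n)
    (p : Proj m)
    (hp1 : β ⟨n - r, by omega⟩ ≤ p)
    (hp2 : p ≤ β ⟨n - r + 1, by omega⟩)
    (hpU : prof i p ≤ prof i ((prof i).symm ⟨κ - 1, by omega⟩)) :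
    prof i (medianRule β prof) ≤ prof i ((prof i).symm ⟨κ - 1, by omega⟩) := by
  obtain ⟨ti, hti⟩ : ∃ t : Proj m, t = topOf (prof i) := ⟨_, rfl⟩
  obtain ⟨s, hs⟩ : ∃ s : Multiset (Proj m),
      s = (Finset.univ.val.map fun j => topOf (prof j)) + Finset.univ.val.map β := ⟨_, rfl⟩
  obtain ⟨l, hl⟩ : ∃ l : List (Proj m), l = Multiset.sort s (· ≤ ·) := ⟨_, rfl⟩
  rw [← hti] at hr
  have hcard : Multiset.card s = 2 * n + 1 := by
    simp [hs]; omega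
  have hlen : l.length = 2 * n + 1 := by
    rw [hl, Multiset.length_sort]; exact hcard
  have hnl : n < l.length := by omega
  have hmed : medianRule β prof = l[n] := by
    rw [medianRule, ← hs, ← hl]
    exact List.getD_eq_getElem l 0 hnl
  -- countP on s
  have hcount : ∀ (q : Proj m → Prop) [DecidablePred q],
      Multiset.countP q s =
      (Finset.univ.filter fun j : Fin n => q (topOf (prof j))).card +
      (Finset.univ.filter fun k : Fin (n+1) => q (β k)).card := by
    intro q _
    rw [hs, Multiset.countP_add, Multiset.countP_map, Multiset.countP_map]
    rw [← Finset.filter_val, ← Finset.filter_val]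
    rfl
  -- countP on l from countP on s
  have hclcs : ∀ (q : Proj m → Prop) [DecidablePred q],
      l.countP (fun x => decide (q x)) = Multiset.countP q s := by
    intro q _
    rw [hl, ← Multiset.coe_countP, Multiset.sort_eq]
  -- count of tops ≥ ti
  have htopge : n - r + 1 ≤ (Finset.univ.filter fun j : Fin n => ti ≤ topOf (prof j)).card := by
    have hsplit := Finset.card_filter_add_card_filter_not
      (s := (Finset.univ : Finset (Fin n))) (p := fun j => ti ≤ topOf (prof j))
    have hlt : (Finset.univ.filter fun j : Fin n => ¬ ti ≤ topOf (prof j)).card ≤ r - 1 := by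
      have hsub : (Finset.univ.filter fun j : Fin n => ¬ ti ≤ topOf (prof j)) ⊆
          (Finset.univ.filter fun j : Fin n => topOf (prof j) ≤ ti) := by
        intro j hj
        simp only [Finset.mem_filter, Finset.mem_univ, true_and, not_le] at hj ⊢
        exact le_of_lt hj
      have hss : (Finset.univ.filter fun j : Fin n => ¬ ti ≤ topOf (prof j)) ⊂
          (Finset.univ.filter fun j : Fin n => topOf (prof j) ≤ ti) := by
        rw [Finset.ssubset_iff_of_subset hsub]
        exact ⟨i, by simp [hti], by simp [hti]⟩
      have := Finset.card_lt_card hss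
      omega
    simp only [Finset.card_univ, Fintype.card_fin] at hsplit
    omega
  -- count of betas with index ≥ n-r+1
  have hbetage : r ≤ (Finset.univ.filter fun k : Fin (n+1) =>
      β (⟨n - r + 1, by omega⟩ : Fin (n+1)) ≤ β k).card := by
    have hsub : Finset.Ici (⟨n - r + 1, by omega⟩ : Fin (n+1)) ⊆
        (Finset.univ.filter fun k : Fin (n+1) => β (⟨n - r + 1, by omega⟩ : Fin (n+1)) ≤ β k) := by
      intro k hk
      simp only [Finset.mem_Ici] at hk
      simp only [Finset.mem_filter, Finset.mem_univ, true_and]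
      exact hβmono hk
    have := Finset.card_le_card hsub
    rw [Fin.card_Ici] at this
    simp only [Fin.val_mk] at this
    omega
  -- count of betas with index ≤ n-r
  have hbetale : n - r + 1 ≤ (Finset.univ.filter fun k : Fin (n+1) =>
      β k ≤ β (⟨n - r, by omega⟩ : Fin (n+1))).card := by
    have := beta_count_le β hβmono (n - r) (by omega)
    omega
  have hlsort : l.Pairwise (· ≤ ·) := by rw [hl]; exact Multiset.pairwise_sort _ _
  -- lower bound: min ti p ≤ l[n]
  have hlow : min ti p ≤ l[n] := by
    apply le_sorted_getElem hlsort hnl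
    rw [hclcs, hcount]
    have ht : n - r + 1 ≤ (Finset.univ.filter fun j : Fin n => min ti p ≤ topOf (prof j)).card := by
      refine le_trans htopge (Finset.card_le_card ?_)
      intro j hj
      simp only [Finset.mem_filter, Finset.mem_univ, true_and] at hj ⊢
      exact le_trans (min_le_left _ _) hj
    have hb : r ≤ (Finset.univ.filter fun k : Fin (n+1) => min ti p ≤ β k).card := by
      refine le_trans hbetage (Finset.card_le_card ?_)
      intro k hk
      simp only [Finset.mem_filter, Finset.mem_univ, true_and] at hk ⊢
      exact le_trans (le_trans (min_le_right _ _) hp2) hk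
    omega
  -- upper bound: l[n] ≤ max ti p
  have hhigh : l[n] ≤ max ti p := by
    apply sorted_getElem_le hlsort hnl
    rw [hclcs, hcount]
    have ht : r ≤ (Finset.univ.filter fun j : Fin n => topOf (prof j) ≤ max ti p).card := by
      rw [hr]
      refine Finset.card_le_card ?_
      intro j hj
      simp only [Finset.mem_filter, Finset.mem_univ, true_and] at hj ⊢
      exact le_trans hj (le_max_left _ _)
    have hb : n - r + 1 ≤ (Finset.univ.filter fun k : Fin (n+1) => β k ≤ max ti p).card := by
      refine le_trans hbetale (Finset.card_le_card ?_)
      intro k hk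
      simp only [Finset.mem_filter, Finset.mem_univ, true_and] at hk ⊢
      exact le_trans hk (le_trans hp1 (le_max_right _ _))
    omega
  -- conclude
  rw [hmed]
  set c : Proj m := l[n] with hc
  by_cases hcp : c = p
  · rw [hcp]; exact hpU
  by_cases hct : c = ti
  · rw [hct, hti, topOf]
    simp only [Equiv.apply_symm_apply]
    exact Fin.zero_le _
  have hcltp : prof i c < prof i p := by
    rcases le_total ti p with hcase | hcase
    · have h1 : ti < c := lt_of_le_of_ne (by simpa [min_eq_left hcase] using hlow) (Ne.symm hct)
      have h2 : c < p := lt_of_le_of_ne (by simpa [max_eq_right hcase] using hhigh) hcp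
      exact hsp i c p (Or.inl ⟨by rw [← hti]; exact h1, h2⟩)
    · have h1 : p < c := lt_of_le_of_ne (by simpa [min_eq_right hcase] using hlow) (Ne.symm hcp)
      have h2 : c < ti := lt_of_le_of_ne (by simpa [max_eq_left hcase] using hhigh) hct
      exact hsp i c p (Or.inr ⟨h1, by rw [← hti]; exact h2⟩)
  exact le_trans (le_of_lt hcltp) hpU
end
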